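/- If a symmetric-key encryption scheme with message space {0,1}^m is quasi–length-preserving (its core function f(k, r, ·) is a bijection on {0,1}^m for every key k and randomness r), then there exist two orthogonal m-qubit states with efficient classical descriptions, namely H^{⊗m}|0^m⟩ and H^{⊗m}|1^m⟩, such that for every key k and randomness r, the type-(2) encryption unitary U (acting as U|x⟩ = |f(k,r,x)⟩ on the core part) satisfies: U(H^{⊗m}|0^m⟩) = H^{⊗m}|0^m⟩ and ⟨0^m| H^{⊗m} U (H^{⊗m}|1^m⟩) = 0. Hence a distinguisher applying H^{⊗m} and measuring distinguishes the two encryptions with probability 1, so no quasi–length-preserving scheme is qIND secure. -/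
import Mathlib


/-- Length-`m` bit strings. -/
abbrev BV (m : ℕ) := Fin m → Bool

/-- Bitwise inner product of two bit strings. -/
def bdot {m : ℕ} (x y : BV m) : ℕ :=
  (Finset.univ.filter fun i => x i = true ∧ y i = true).card

/-- The vector `H^{⊗m}|x⟩`. -/
noncomputable def Hvec (m : ℕ) (x : BV m) : BV m → ℂ :=
  fun y => ((-1 : ℂ) ^ bdot x y) / ((Real.sqrt (2 ^ m) : ℝ) : ℂ)

/-- The `m`-fold Hadamard matrix `H^{⊗m}`. -/
noncomputable def Hmat (m : ℕ) : Matrix (BV m) (BV m) ℂ :=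
  Matrix.of fun x y => ((-1 : ℂ) ^ bdot x y) / ((Real.sqrt (2 ^ m) : ℝ) : ℂ)

/-- The type-(2) unitary of a basis bijection, as a matrix: `U|x⟩ = |f(x)⟩`. -/
def U2mat {m : ℕ} (f : BV m → BV m) : Matrix (BV m) (BV m) ℂ :=
  Matrix.of fun z x => if f x = z then 1 else 0

lemma bdot_zero {m : ℕ} (y : BV m) : bdot (fun _ => false) y = 0 := by
  simp [bdot]

lemma sign_eq_prod {m : ℕ} (z : BV m) :
    ((-1 : ℂ)) ^ bdot (fun _ => true) z = ∏ i, (if z i = true then (-1 : ℂ) else 1) := by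
  rw [Finset.prod_ite, Finset.prod_const, Finset.prod_const, one_pow, mul_one, bdot]
  simp

lemma sum_sign (m : ℕ) (hm : 1 ≤ m) :
    ∑ z : BV m, ((-1 : ℂ)) ^ bdot (fun _ => true) z = 0 := by
  have h := Finset.prod_univ_sum (fun _ : Fin m => (Finset.univ : Finset Bool))
    (fun _ b => if b = true then (-1 : ℂ) else 1)
  simp only [Fintype.piFinset_univ] at h
  calc ∑ z : BV m, ((-1 : ℂ)) ^ bdot (fun _ => true) z
      = ∑ z : BV m, ∏ i, (if z i = true then (-1 : ℂ) else 1) := by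
        exact Finset.sum_congr rfl fun z _ => sign_eq_prod z
    _ = ∏ _i : Fin m, ∑ b : Bool, (if b = true then (-1 : ℂ) else 1) := h.symm
    _ = 0 := by
        have : ∑ b : Bool, (if b = true then (-1 : ℂ) else 1) = 0 := by simp
        rw [this, Finset.prod_const, Finset.card_univ, Fintype.card_fin]
        exact zero_pow (by omega)

lemma U2_mulVec {m : ℕ} (g : BV m → BV m) (hg : Function.Bijective g) (v : BV m → ℂ) :
    (U2mat g).mulVec v = fun z => v ((Equiv.ofBijective g hg).symm z) := by
  funext z
  simp only [Matrix.mulVec, dotProduct, U2mat, Matrix.of_apply]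
  rw [Finset.sum_eq_single ((Equiv.ofBijective g hg).symm z)]
  · simp [Equiv.ofBijective_apply_symm_apply]
  · intro x _ hx
    have : g x ≠ z := fun h => hx (by
      have := congrArg (Equiv.ofBijective g hg).symm (h ▸ rfl : (Equiv.ofBijective g hg) x = z)
      simpa using this)
    simp [this]
  · intro h; exact absurd (Finset.mem_univ _) h

/-- For a quasi–length-preserving encryption scheme (core function `f(k,r,·)` a bijection
of `{0,1}^m` for every key `k` and randomness `r`), the two orthogonal states
`φ₀ = H^{⊗m}|0^m⟩` and `φ₁ = H^{⊗m}|1^m⟩` satisfy, for every `k` and `r`, that the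
type-(2) encryption unitary `U` fixes `φ₀` and `⟨0^m| H^{⊗m} U φ₁ = 0`; hence the
distinguisher applying `H^{⊗m}` and measuring distinguishes the two encryptions with
probability 1, so no quasi–length-preserving scheme is qIND secure. -/
theorem stmt19 (m : ℕ) (hm : 1 ≤ m) (K R : Type*)
    (f : K → R → BV m → BV m) (hf : ∀ k r, Function.Bijective (f k r)) :
    (∑ z : BV m, star (Hvec m (fun _ => false) z) * Hvec m (fun _ => true) z) = 0 ∧
    ∀ (k : K) (r : R),
      (U2mat (f k r)).mulVec (Hvec m (fun _ => false)) = Hvec m (fun _ => false) ∧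
      ((Hmat m).mulVec ((U2mat (f k r)).mulVec (Hvec m (fun _ => true)))) (fun _ => false)
        = 0 := by
  have hsum := sum_sign m hm
  constructor
  · simp only [Hvec, bdot_zero, pow_zero, star_div₀, star_one]
    have : ∑ x : BV m, 1 / star ((Real.sqrt (2 ^ m) : ℝ) : ℂ) *
        (((-1 : ℂ)) ^ bdot (fun _ => true) x / ((Real.sqrt (2 ^ m) : ℝ) : ℂ))
        = (1 / star ((Real.sqrt (2 ^ m) : ℝ) : ℂ) / ((Real.sqrt (2 ^ m) : ℝ) : ℂ)) *
          ∑ z : BV m, ((-1 : ℂ)) ^ bdot (fun _ => true) z := by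
      rw [Finset.mul_sum]
      exact Finset.sum_congr rfl fun z _ => by ring
    rw [this, hsum, mul_zero]
  · intro k r
    constructor
    · rw [U2_mulVec _ (hf k r)]
      funext z
      simp [Hvec, bdot_zero]
    · rw [U2_mulVec _ (hf k r)]
      simp only [Matrix.mulVec, dotProduct, Hmat, Matrix.of_apply, bdot_zero, pow_zero]
      have h1 := Equiv.sum_comp ((Equiv.ofBijective (f k r) (hf k r)).symm)
        (fun z => (1 / ((Real.sqrt (2 ^ m) : ℝ) : ℂ)) * Hvec m (fun _ => true) z)
      rw [h1]
      have : ∑ z : BV m, (1 / ((Real.sqrt (2 ^ m) : ℝ) : ℂ)) * Hvec m (fun _ => true) z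
          = (1 / ((Real.sqrt (2 ^ m) : ℝ) : ℂ) / ((Real.sqrt (2 ^ m) : ℝ) : ℂ)) *
            ∑ z : BV m, ((-1 : ℂ)) ^ bdot (fun _ => true) z := by
        rw [Finset.mul_sum]
        exact Finset.sum_congr rfl fun z _ => by rw [Hvec]; ring
      rw [this, hsum, mul_zero]
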